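/- Fix n ≥ 1 and work in ℝⁿ with Lebesgue measure; |x| denotes the Euclidean norm. Let K : ℝⁿ → [0,∞) be a radial measurable kernel, i.e., K(x) = K̃(|x|) for some K̃ : [0,∞) → [0,∞). Then the cell energy b is the same for all halfspaces: for any ν₁, ν₂ ∈ ℝⁿ∖{0} one has b(H_{ν₁}) = b(H_{ν₂}). -/

import Mathlib

open MeasureTheory Set Filter Metric
open scoped ENNReal Topology

/-- The halfspace with inner normal `ν`. -/
def halfspace {n : ℕ} (ν : EuclideanSpace ℝ (Fin n)) : Set (EuclideanSpace ℝ (Fin n)) :=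
  {x | 0 ≤ (inner ℝ x ν : ℝ)}

/-- The rescaled interaction energy
`J¹_ε(E;B(0,1)) = ∫_B ∫_B K_ε(x−y)|χ_E(x)−χ_E(y)| dx dy` with `K_ε(x) = ε^{-n}K(x/ε)`. -/
noncomputable def J1 {n : ℕ} (K : EuclideanSpace ℝ (Fin n) → ℝ) (ε : ℝ)
    (E : Set (EuclideanSpace ℝ (Fin n))) : ℝ≥0∞ :=
  ∫⁻ x in ball (0 : EuclideanSpace ℝ (Fin n)) 1,
    ∫⁻ y in ball (0 : EuclideanSpace ℝ (Fin n)) 1,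
      ENNReal.ofReal ((ε ^ n)⁻¹ * K (ε⁻¹ • (x - y)))
        * ENNReal.ofReal
            |E.indicator (fun _ => (1:ℝ)) x - E.indicator (fun _ => (1:ℝ)) y|

/-- The cell energy `b(H)`: the infimum of `liminf (1/(2ε_j)) J¹_{ε_j}(E_j;B(0,1))` over
all sequences `ε_j → 0⁺` and all sequences of sets `E_j` with `χ_{E_j} → χ_H` in
`L¹(B(0,1))`. -/
noncomputable def cellEnergy {n : ℕ} (K : EuclideanSpace ℝ (Fin n) → ℝ)
    (H : Set (EuclideanSpace ℝ (Fin n))) : ℝ≥0∞ :=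
  sInf {c : ℝ≥0∞ | ∃ (ε : ℕ → ℝ) (E : ℕ → Set (EuclideanSpace ℝ (Fin n))),
    (∀ j, 0 < ε j) ∧ Tendsto ε atTop (𝓝 0) ∧
    Tendsto (fun j => ∫ x in ball (0 : EuclideanSpace ℝ (Fin n)) 1,
        |(E j).indicator (fun _ => (1:ℝ)) x - H.indicator (fun _ => (1:ℝ)) x|)
      atTop (𝓝 0) ∧
    c = liminf (fun j => (ENNReal.ofReal (2 * ε j))⁻¹ * J1 K (ε j) (E j)) atTop}

lemma cellEnergy_le_of_ne {n : ℕ}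
    (K : EuclideanSpace ℝ (Fin n) → ℝ) (Ktilde : ℝ → ℝ)
    (hKrad : ∀ x, K x = Ktilde ‖x‖)
    (ν₁ ν₂ : EuclideanSpace ℝ (Fin n)) (hν₁ : ν₁ ≠ 0) (hν₂ : ν₂ ≠ 0) :
    cellEnergy K (halfspace ν₁) ≤ cellEnergy K (halfspace ν₂) := by
  set w₁ : EuclideanSpace ℝ (Fin n) := ‖ν₂‖ • ν₁ with hw₁
  set w₂ : EuclideanSpace ℝ (Fin n) := ‖ν₁‖ • ν₂ with hw₂
  have hnorm : ‖w₁‖ = ‖w₂‖ := by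
    simp [hw₁, hw₂, norm_smul, abs_of_nonneg (norm_nonneg _), mul_comm]
  set R := (Submodule.reflection (ℝ ∙ (w₁ - w₂))ᗮ) with hR
  have hRw : R w₁ = w₂ := Submodule.reflection_sub hnorm
  have hRmp : MeasurePreserving R := R.measurePreserving
  have hRemb : MeasurableEmbedding R :=
    R.toHomeomorph.measurableEmbedding
  have hRball : R ⁻¹' (ball (0 : EuclideanSpace ℝ (Fin n)) 1) = ball 0 1 := by
    ext x
    simp [mem_ball, dist_eq_norm]
  have hhalf : R ⁻¹' (halfspace ν₂) = halfspace ν₁ := by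
    ext x
    have h1 : (inner ℝ (R x) w₂ : ℝ) = inner ℝ x w₁ := by
      rw [← hRw]; exact R.inner_map_map x w₁
    have h2 : (inner ℝ (R x) w₂ : ℝ) = ‖ν₁‖ * inner ℝ (R x) ν₂ := by
      rw [hw₂]; exact real_inner_smul_right _ _ _
    have h3 : (inner ℝ x w₁ : ℝ) = ‖ν₂‖ * inner ℝ x ν₁ := by
      rw [hw₁]; exact real_inner_smul_right _ _ _
    have hp1 : (0:ℝ) < ‖ν₁‖ := norm_pos_iff.2 hν₁
    have hp2 : (0:ℝ) < ‖ν₂‖ := norm_pos_iff.2 hν₂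
    simp only [mem_preimage, halfspace, mem_setOf_eq]
    have hsign : ‖ν₁‖ * (inner ℝ (R x) ν₂ : ℝ) = ‖ν₂‖ * inner ℝ x ν₁ := by
      rw [← h2, h1, h3]
    constructor
    · intro h
      nlinarith [mul_nonneg hp2.le h]
    · intro h
      nlinarith [mul_nonneg hp1.le h]
  -- indicator identity
  have hind : ∀ (S : Set (EuclideanSpace ℝ (Fin n))) x,
      (R ⁻¹' S).indicator (fun _ => (1:ℝ)) x = S.indicator (fun _ => (1:ℝ)) (R x) := by
    intro S x
    by_cases h : R x ∈ S <;> simp [Set.indicator, h]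
  apply sInf_le_sInf
  rintro c ⟨ε, E, hpos, hε, hconv, hc⟩
  refine ⟨ε, fun j => R ⁻¹' (E j), hpos, hε, ?_, ?_⟩
  · -- L¹ convergence
    have : ∀ j, (∫ x in ball (0 : EuclideanSpace ℝ (Fin n)) 1,
        |(R ⁻¹' (E j)).indicator (fun _ => (1:ℝ)) x -
          (halfspace ν₁).indicator (fun _ => (1:ℝ)) x|)
        = ∫ x in ball (0 : EuclideanSpace ℝ (Fin n)) 1,
        |(E j).indicator (fun _ => (1:ℝ)) x - (halfspace ν₂).indicator (fun _ => (1:ℝ)) x| := by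
      intro j
      rw [← hhalf]
      calc (∫ x in ball (0 : EuclideanSpace ℝ (Fin n)) 1,
              |(R ⁻¹' (E j)).indicator (fun _ => (1:ℝ)) x -
                (R ⁻¹' (halfspace ν₂)).indicator (fun _ => (1:ℝ)) x|)
          = ∫ x in R ⁻¹' (ball (0 : EuclideanSpace ℝ (Fin n)) 1),
              |(E j).indicator (fun _ => (1:ℝ)) (R x) -
                (halfspace ν₂).indicator (fun _ => (1:ℝ)) (R x)| := by
            rw [hRball]; simp_rw [hind]
        _ = _ := hRmp.setIntegral_preimage_emb hRemb
            (fun z => |(E j).indicator (fun _ => (1:ℝ)) z -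
              (halfspace ν₂).indicator (fun _ => (1:ℝ)) z|) _
    simpa only [this] using hconv
  · -- J1 identity
    have hJ : ∀ j, J1 K (ε j) (R ⁻¹' (E j)) = J1 K (ε j) (E j) := by
      intro j
      unfold J1
      have key : ∀ (e : ℝ) x y, K (e⁻¹ • (R x - R y)) = K (e⁻¹ • (x - y)) := by
        intro e x y
        have hnm : ‖R x - R y‖ = ‖x - y‖ := by
          rw [← map_sub]; exact R.norm_map _
        rw [hKrad, hKrad]
        simp [norm_smul, hnm]
      calc (∫⁻ x in ball (0 : EuclideanSpace ℝ (Fin n)) 1,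
              ∫⁻ y in ball (0 : EuclideanSpace ℝ (Fin n)) 1,
                ENNReal.ofReal (((ε j) ^ n)⁻¹ * K ((ε j)⁻¹ • (x - y)))
                  * ENNReal.ofReal
                      |(R ⁻¹' (E j)).indicator (fun _ => (1:ℝ)) x -
                        (R ⁻¹' (E j)).indicator (fun _ => (1:ℝ)) y|)
          = ∫⁻ x in ball (0 : EuclideanSpace ℝ (Fin n)) 1,
              ∫⁻ y in R ⁻¹' (ball (0 : EuclideanSpace ℝ (Fin n)) 1),
                ENNReal.ofReal (((ε j) ^ n)⁻¹ * K ((ε j)⁻¹ • (R x - R y)))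
                  * ENNReal.ofReal
                      |(E j).indicator (fun _ => (1:ℝ)) (R x) -
                        (E j).indicator (fun _ => (1:ℝ)) (R y)| := by
            rw [hRball]
            refine lintegral_congr fun x => lintegral_congr fun y => ?_
            rw [key, hind, hind]
        _ = ∫⁻ x in ball (0 : EuclideanSpace ℝ (Fin n)) 1,
              ∫⁻ y in ball (0 : EuclideanSpace ℝ (Fin n)) 1,
                ENNReal.ofReal (((ε j) ^ n)⁻¹ * K ((ε j)⁻¹ • (R x - y)))
                  * ENNReal.ofReal
                      |(E j).indicator (fun _ => (1:ℝ)) (R x) -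
                        (E j).indicator (fun _ => (1:ℝ)) y| := by
            refine lintegral_congr fun x => ?_
            exact hRmp.setLIntegral_comp_preimage_emb hRemb
              (fun z => ENNReal.ofReal (((ε j) ^ n)⁻¹ * K ((ε j)⁻¹ • (R x - z)))
                * ENNReal.ofReal
                    |(E j).indicator (fun _ => (1:ℝ)) (R x) -
                      (E j).indicator (fun _ => (1:ℝ)) z|) _
        _ = ∫⁻ x in R ⁻¹' (ball (0 : EuclideanSpace ℝ (Fin n)) 1),
              (fun x' => ∫⁻ y in ball (0 : EuclideanSpace ℝ (Fin n)) 1,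
                ENNReal.ofReal (((ε j) ^ n)⁻¹ * K ((ε j)⁻¹ • (x' - y)))
                  * ENNReal.ofReal
                      |(E j).indicator (fun _ => (1:ℝ)) x' -
                        (E j).indicator (fun _ => (1:ℝ)) y|) (R x) := by rw [hRball]
        _ = _ := hRmp.setLIntegral_comp_preimage_emb hRemb
            (fun x' => ∫⁻ y in ball (0 : EuclideanSpace ℝ (Fin n)) 1,
              ENNReal.ofReal (((ε j) ^ n)⁻¹ * K ((ε j)⁻¹ • (x' - y)))
                * ENNReal.ofReal
                    |(E j).indicator (fun _ => (1:ℝ)) x' -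
                      (E j).indicator (fun _ => (1:ℝ)) y|) _
    simp only [hJ]; exact hc

/-- For a radial kernel, the cell energy does not depend on the halfspace. -/
theorem cellEnergy_radial_invariant (n : ℕ) (hn : 1 ≤ n)
    (K : EuclideanSpace ℝ (Fin n) → ℝ) (Ktilde : ℝ → ℝ)
    (hKrad : ∀ x, K x = Ktilde ‖x‖)
    (ν₁ ν₂ : EuclideanSpace ℝ (Fin n)) (hν₁ : ν₁ ≠ 0) (hν₂ : ν₂ ≠ 0) :
    cellEnergy K (halfspace ν₁) = cellEnergy K (halfspace ν₂) :=
  le_antisymm (cellEnergy_le_of_ne K Ktilde hKrad ν₁ ν₂ hν₁ hν₂)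
    (cellEnergy_le_of_ne K Ktilde hKrad ν₂ ν₁ hν₂ hν₁)
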